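/- In the graph G_l (l ≥ 3), the largest clique has size exactly 3, and every triangle of G_l is of the form {u_{i−1}, v_{i−1}, u_i} or {v_{i−1}, u_i, v_i} for some 2 ≤ i ≤ l. -/

import Mathlib

/-- The relation defining the lower-bound graph `G_l`: vertex `(i, false)`
plays the role of `u_{i+1}` and `(i, true)` of `v_{i+1}` (0-indexed). -/
def GlRel (l : ℕ) (a b : Fin l × Bool) : Prop :=
  (a.1 = b.1 ∧ a.2 ≠ b.2) ∨
    ((a.1 : ℕ) + 1 = (b.1 : ℕ) ∧ (a.2 = b.2 ∨ (a.2 = true ∧ b.2 = false)))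

def Gl (l : ℕ) : SimpleGraph (Fin l × Bool) := SimpleGraph.fromRel (GlRel l)

lemma Gl_adj {l : ℕ} {i j : Fin l} {x y : Bool} :
    (Gl l).Adj (i, x) (j, y) ↔
      (((i : ℕ) = j ∧ x ≠ y) ∨
        ((i : ℕ) + 1 = (j : ℕ) ∧ (x = y ∨ (x = true ∧ y = false))) ∨
        ((j : ℕ) + 1 = (i : ℕ) ∧ (y = x ∨ (y = true ∧ x = false)))) := by
  constructor
  · rintro ⟨hne, h | h⟩
    · rcases h with ⟨h1, h2⟩ | ⟨h1, h2⟩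
      · exact Or.inl ⟨congrArg Fin.val h1, h2⟩
      · exact Or.inr (Or.inl ⟨h1, h2⟩)
    · rcases h with ⟨h1, h2⟩ | ⟨h1, h2⟩
      · exact Or.inl ⟨(congrArg Fin.val h1).symm, fun h => h2 h.symm⟩
      · exact Or.inr (Or.inr ⟨h1, h2⟩)
  · rintro (⟨h1, h2⟩ | ⟨h1, h2⟩ | ⟨h1, h2⟩)
    · exact ⟨by simp [Prod.ext_iff, h2], Or.inl (Or.inl ⟨Fin.ext h1, h2⟩)⟩
    · refine ⟨?_, Or.inl (Or.inr ⟨h1, h2⟩)⟩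
      simp only [ne_eq, Prod.ext_iff, not_and]
      intro h; exact absurd (congrArg Fin.val h) (by omega)
    · refine ⟨?_, Or.inr (Or.inr ⟨h1, h2⟩)⟩
      simp only [ne_eq, Prod.ext_iff, not_and]
      intro h; exact absurd (congrArg Fin.val h) (by omega)

lemma Gl_triangle {l : ℕ} {a b c : Fin l × Bool}
    (hab : (Gl l).Adj a b) (hac : (Gl l).Adj a c) (hbc : (Gl l).Adj b c) :
    ∃ i j : Fin l, (j : ℕ) + 1 = (i : ℕ) ∧
      (({a, b, c} : Set (Fin l × Bool)) = {(j, false), (j, true), (i, false)} ∨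
        ({a, b, c} : Set (Fin l × Bool)) = {(j, true), (i, false), (i, true)}) := by
  obtain ⟨ia, xa⟩ := a
  obtain ⟨ib, xb⟩ := b
  obtain ⟨ic, xc⟩ := c
  cases xa <;> cases xb <;> cases xc <;>
    simp only [Gl_adj, ne_eq, Bool.false_eq_true, Bool.true_eq_false,
      not_false_eq_true, not_true_eq_false, and_true, and_false, false_and,
      true_and, or_false, false_or, and_self] at hab hac hbc
  · omega
  · -- f f t : T1, c is the v
    have h : ((ic : ℕ) = ia ∧ (ia : ℕ) + 1 = ib) ∨ ((ic : ℕ) = ib ∧ (ib : ℕ) + 1 = ia) := by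
      omega
    rcases h with ⟨h1, h2⟩ | ⟨h1, h2⟩
    · have e : ic = ia := Fin.ext h1
      subst e
      exact ⟨ib, ic, h2, Or.inl (by ext x; simp only [Set.mem_insert_iff, Set.mem_singleton_iff]; try tauto)⟩
    · have e : ic = ib := Fin.ext h1
      subst e
      exact ⟨ia, ic, h2, Or.inl (by ext x; simp only [Set.mem_insert_iff, Set.mem_singleton_iff]; try tauto)⟩
  · -- f t f : T1, b is the v
    have h : ((ib : ℕ) = ia ∧ (ia : ℕ) + 1 = ic) ∨ ((ib : ℕ) = ic ∧ (ic : ℕ) + 1 = ia) := by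
      omega
    rcases h with ⟨h1, h2⟩ | ⟨h1, h2⟩
    · have e : ib = ia := Fin.ext h1
      subst e
      exact ⟨ic, ib, h2, Or.inl (by ext x; simp only [Set.mem_insert_iff, Set.mem_singleton_iff]; try tauto)⟩
    · have e : ib = ic := Fin.ext h1
      subst e
      exact ⟨ia, ib, h2, Or.inl (by ext x; simp only [Set.mem_insert_iff, Set.mem_singleton_iff]; try tauto)⟩
  · -- f t t : T2, a is the u
    have h : ((ib : ℕ) = ia ∧ (ia : ℕ) = (ic : ℕ) + 1) ∨ ((ic : ℕ) = ia ∧ (ia : ℕ) = (ib : ℕ) + 1) := by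
      omega
    rcases h with ⟨h1, h2⟩ | ⟨h1, h2⟩
    · have e : ib = ia := Fin.ext h1
      subst e
      exact ⟨ib, ic, h2.symm, Or.inr (by ext x; simp only [Set.mem_insert_iff, Set.mem_singleton_iff]; try tauto)⟩
    · have e : ic = ia := Fin.ext h1
      subst e
      exact ⟨ic, ib, h2.symm, Or.inr (by ext x; simp only [Set.mem_insert_iff, Set.mem_singleton_iff]; try tauto)⟩
  · -- t f f : T1, a is the v
    have h : ((ia : ℕ) = ib ∧ (ib : ℕ) + 1 = ic) ∨ ((ia : ℕ) = ic ∧ (ic : ℕ) + 1 = ib) := by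
      omega
    rcases h with ⟨h1, h2⟩ | ⟨h1, h2⟩
    · have e : ia = ib := Fin.ext h1
      subst e
      exact ⟨ic, ia, h2, Or.inl (by ext x; simp only [Set.mem_insert_iff, Set.mem_singleton_iff]; try tauto)⟩
    · have e : ia = ic := Fin.ext h1
      subst e
      exact ⟨ib, ia, h2, Or.inl (by ext x; simp only [Set.mem_insert_iff, Set.mem_singleton_iff]; try tauto)⟩
  · -- t f t : T2, b is the u
    have h : ((ia : ℕ) = ib ∧ (ib : ℕ) = (ic : ℕ) + 1) ∨ ((ic : ℕ) = ib ∧ (ib : ℕ) = (ia : ℕ) + 1) := by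
      omega
    rcases h with ⟨h1, h2⟩ | ⟨h1, h2⟩
    · have e : ia = ib := Fin.ext h1
      subst e
      exact ⟨ia, ic, h2.symm, Or.inr (by ext x; simp only [Set.mem_insert_iff, Set.mem_singleton_iff]; try tauto)⟩
    · have e : ic = ib := Fin.ext h1
      subst e
      exact ⟨ic, ia, h2.symm, Or.inr (by ext x; simp only [Set.mem_insert_iff, Set.mem_singleton_iff]; try tauto)⟩
  · -- t t f : T2, c is the u
    have h : ((ia : ℕ) = ic ∧ (ic : ℕ) = (ib : ℕ) + 1) ∨ ((ib : ℕ) = ic ∧ (ic : ℕ) = (ia : ℕ) + 1) := by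
      omega
    rcases h with ⟨h1, h2⟩ | ⟨h1, h2⟩
    · have e : ia = ic := Fin.ext h1
      subst e
      exact ⟨ia, ib, h2.symm, Or.inr (by ext x; simp only [Set.mem_insert_iff, Set.mem_singleton_iff]; try tauto)⟩
    · have e : ib = ic := Fin.ext h1
      subst e
      exact ⟨ib, ia, h2.symm, Or.inr (by ext x; simp only [Set.mem_insert_iff, Set.mem_singleton_iff]; try tauto)⟩
  · omega

lemma Gl_no_K4 {l : ℕ} {a b c d : Fin l × Bool}
    (hab : (Gl l).Adj a b) (hac : (Gl l).Adj a c) (had : (Gl l).Adj a d)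
    (hbc : (Gl l).Adj b c) (hbd : (Gl l).Adj b d) (hcd : (Gl l).Adj c d) : False := by
  obtain ⟨ia, xa⟩ := a
  obtain ⟨ib, xb⟩ := b
  obtain ⟨ic, xc⟩ := c
  obtain ⟨id, xd⟩ := d
  cases xa <;> cases xb <;> cases xc <;> cases xd <;>
    simp only [Gl_adj, ne_eq, Bool.false_eq_true, Bool.true_eq_false,
      not_false_eq_true, not_true_eq_false, and_true, and_false, false_and,
      true_and, or_false, false_or, and_self] at hab hac had hbc hbd hcd <;>
    omega

theorem Gl_cliques (l : ℕ) (hl : 3 ≤ l) :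
    (∀ C : Set (Fin l × Bool), (Gl l).IsClique C → C.ncard ≤ 3) ∧
    (∃ C : Set (Fin l × Bool), (Gl l).IsClique C ∧ C.ncard = 3) ∧
    (∀ C : Set (Fin l × Bool), (Gl l).IsClique C → C.ncard = 3 →
      ∃ i j : Fin l, (j : ℕ) + 1 = (i : ℕ) ∧
        (C = {(j, false), (j, true), (i, false)} ∨
          C = {(j, true), (i, false), (i, true)})) := by
  refine ⟨?_, ?_, ?_⟩
  · intro C hC
    by_contra h
    push_neg at h
    obtain ⟨t, hts, ht4⟩ := Set.exists_subset_card_eq (show 4 ≤ C.ncard from h)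
    obtain ⟨a, ha⟩ : t.Nonempty := Set.nonempty_of_ncard_ne_zero (by omega)
    have ht3 : (t \ {a}).ncard = 3 := by
      rw [Set.ncard_diff_singleton_of_mem ha, ht4]
    obtain ⟨b, c, d, hbc, hbd, hcd, heq⟩ := Set.ncard_eq_three.mp ht3
    have hb : b ∈ t \ {a} := by rw [heq]; simp
    have hc : c ∈ t \ {a} := by rw [heq]; simp
    have hd : d ∈ t \ {a} := by rw [heq]; simp
    have hCa := hts ha
    have hCb := hts hb.1
    have hCc := hts hc.1
    have hCd := hts hd.1
    exact Gl_no_K4 (hC hCa hCb (Ne.symm hb.2)) (hC hCa hCc (Ne.symm hc.2))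
      (hC hCa hCd (Ne.symm hd.2)) (hC hCb hCc hbc) (hC hCb hCd hbd) (hC hCc hCd hcd)
  · refine ⟨{(⟨0, by omega⟩, false), (⟨0, by omega⟩, true), (⟨1, by omega⟩, false)}, ?_, ?_⟩
    · intro x hx y hy hxy
      simp only [Set.mem_insert_iff, Set.mem_singleton_iff] at hx hy
      rcases hx with rfl | rfl | rfl <;> rcases hy with rfl | rfl | rfl <;>
        first
          | exact absurd rfl hxy
          | (rw [Gl_adj]; simp)
    · refine Set.ncard_eq_three.mpr ⟨_, _, _, ?_, ?_, ?_, rfl⟩ <;> simp [Prod.ext_iff, Fin.ext_iff]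
  · intro C hC h3
    obtain ⟨a, b, c, hab, hac, hbc, rfl⟩ := Set.ncard_eq_three.mp h3
    have ha : a ∈ ({a, b, c} : Set (Fin l × Bool)) := by simp
    have hb : b ∈ ({a, b, c} : Set (Fin l × Bool)) := by simp
    have hc : c ∈ ({a, b, c} : Set (Fin l × Bool)) := by simp
    exact Gl_triangle (hC ha hb hab) (hC ha hc hac) (hC hb hc hbc)
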